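/- (Doubling identity for the Barnes G-function.) For every x ∈ ℂ: G(1+2x)·G(1/2)² = 2^{x(2x−1)}·π^{−x−1/2}·G(1/2+x)·G(1+x)²·G(3/2+x), where 2^{x(2x−1)} = exp(x(2x−1)·log 2) and π^{−x−1/2} = exp(−(x+1/2)·log π). -/

import Mathlib

open Complex Real

/-- The Barnes G-function, defined by the everywhere-convergent Weierstrass product
`G(1+z) = (2π)^{z/2}·exp(−(z+z²(1+γ))/2)·∏_{n≥1} (1+z/n)ⁿ·exp(z²/(2n) − z)`. -/
noncomputable def barnesG (w : ℂ) : ℂ :=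
  (2 * (π : ℂ)) ^ ((w - 1) / 2) *
    Complex.exp (-((w - 1) + (w - 1) ^ 2 * (1 + (Real.eulerMascheroniConstant : ℂ))) / 2) *
    ∏' n : ℕ, ((1 + (w - 1) / ((n : ℂ) + 1)) ^ (n + 1) *
      Complex.exp ((w - 1) ^ 2 / (2 * ((n : ℂ) + 1)) - (w - 1)))

namespace BarnesAux
open Filter Finset Topology

noncomputable def g (z : ℂ) (n : ℕ) : ℂ :=
  (1 + z / ((n : ℂ) + 1)) ^ (n + 1) * Complex.exp (z ^ 2 / (2 * ((n : ℂ) + 1)) - z)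

lemma logTaylor_three (w : ℂ) : logTaylor 3 w = w - w ^ 2 / 2 := by
  simp [logTaylor, Finset.sum_range_succ]
  ring

lemma one_add_ne_zero {w : ℂ} (h : ‖w‖ < 1) : (1 : ℂ) + w ≠ 0 := by
  intro hc
  have : w = -1 := by linear_combination hc
  simp [this] at h

lemma ncast_ne {n : ℕ} : ((n:ℂ)+1) ≠ 0 := by
  have : ((n+1 : ℕ) : ℂ) ≠ 0 := Nat.cast_ne_zero.mpr (Nat.succ_ne_zero n)
  push_cast at this
  exact this

lemma norm_ncast {n : ℕ} : ‖((n:ℂ)+1)‖ = (n:ℝ)+1 := by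
  have : ((n:ℂ)+1) = ((n+1 : ℕ) : ℂ) := by push_cast; ring
  rw [this, Complex.norm_natCast]
  push_cast
  ring

lemma g_eq_exp {z : ℂ} {n : ℕ} (h : ‖z / ((n:ℂ)+1)‖ < 1) :
    g z n = Complex.exp (((n:ℂ)+1) * (Complex.log (1 + z/((n:ℂ)+1)) - logTaylor 3 (z/((n:ℂ)+1)))) := by
  have hne : ((n:ℂ)+1) ≠ 0 := ncast_ne
  have h0 : (1 : ℂ) + z/((n:ℂ)+1) ≠ 0 := one_add_ne_zero h
  have hcast : ((n:ℂ)+1) = ((n+1 : ℕ) : ℂ) := by push_cast; ring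
  have hpow : (1 + z/((n:ℂ)+1))^(n+1)
      = Complex.exp (((n:ℂ)+1) * Complex.log (1 + z/((n:ℂ)+1))) := by
    rw [hcast] at h0 ⊢
    rw [Complex.exp_nat_mul, Complex.exp_log h0]
  rw [g, hpow, ← Complex.exp_add]
  congr 1
  rw [logTaylor_three]
  field_simp
  ring

lemma g_sub_one_bound {z : ℂ} {n : ℕ} (h1 : ‖z‖^3 ≤ (n:ℝ)+1) (h2 : 4*‖z‖ ≤ (n:ℝ)+1) :
    ‖g z n - 1‖ ≤ 2*‖z‖^3 / ((n:ℝ)+1)^2 := by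
  have hn1 : (0:ℝ) < (n:ℝ)+1 := by positivity
  have hw : ‖z / ((n:ℂ)+1)‖ = ‖z‖ / ((n:ℝ)+1) := by
    rw [norm_div, norm_ncast]
  have hwle : ‖z / ((n:ℂ)+1)‖ ≤ 1/4 := by
    rw [hw, div_le_iff₀ hn1]
    linarith
  have hwlt : ‖z / ((n:ℂ)+1)‖ < 1 := lt_of_le_of_lt hwle (by norm_num)
  set w := z / ((n:ℂ)+1) with hwdef
  have hlog : ‖Complex.log (1 + w) - logTaylor 3 w‖ ≤ ‖w‖^3 * (1 - ‖w‖)⁻¹ / 3 := by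
    have := Complex.norm_log_sub_logTaylor_le 2 hwlt
    norm_num at this ⊢
    exact this
  have hinv : (1 - ‖w‖)⁻¹ ≤ 4/3 := by
    rw [inv_le_comm₀ (by linarith) (by norm_num)]
    linarith
  have hub : ‖((n:ℂ)+1) * (Complex.log (1 + w) - logTaylor 3 w)‖ ≤ ‖z‖^3 / ((n:ℝ)+1)^2 := by
    rw [norm_mul, norm_ncast]
    have hw3 : ‖w‖^3 = ‖z‖^3 / ((n:ℝ)+1)^3 := by
      rw [hw, div_pow]
    calc ((n:ℝ)+1) * ‖Complex.log (1 + w) - logTaylor 3 w‖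
        ≤ ((n:ℝ)+1) * (‖w‖^3 * (4/3) / 3) := by
          apply mul_le_mul_of_nonneg_left _ (le_of_lt hn1)
          calc ‖Complex.log (1 + w) - logTaylor 3 w‖ ≤ ‖w‖^3 * (1 - ‖w‖)⁻¹ / 3 := hlog
            _ ≤ ‖w‖^3 * (4/3) / 3 := by gcongr
      _ ≤ ((n:ℝ)+1) * (‖w‖^3) := by nlinarith [pow_nonneg (norm_nonneg w) 3]
      _ = ‖z‖^3 / ((n:ℝ)+1)^2 := by
          rw [hw3]; field_simp
  have hle1 : ‖((n:ℂ)+1) * (Complex.log (1 + w) - logTaylor 3 w)‖ ≤ 1 := by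
    refine hub.trans ?_
    rw [div_le_one (by positivity)]
    nlinarith
  rw [g_eq_exp hwlt]
  calc ‖Complex.exp (((n:ℂ)+1) * (Complex.log (1 + w) - logTaylor 3 w)) - 1‖
      ≤ 2 * ‖((n:ℂ)+1) * (Complex.log (1 + w) - logTaylor 3 w)‖ := by
        simpa using Complex.norm_exp_sub_one_le (x := ((n:ℂ)+1) * (Complex.log (1 + w) - logTaylor 3 w)) (by simpa using hle1)
    _ ≤ 2 * (‖z‖^3 / ((n:ℝ)+1)^2) := by linarith
    _ = 2*‖z‖^3 / ((n:ℝ)+1)^2 := by ring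

noncomputable def P (z : ℂ) : ℂ := ∏' n : ℕ, g z n

lemma eventually_bound (z : ℂ) :
    ∀ᶠ n : ℕ in atTop, ‖g z n - 1‖ ≤ 2*‖z‖^3 / ((n:ℝ)+1)^2 ∧ ‖g z n - 1‖ ≤ 1/2 := by
  have hc : ∀ᶠ n : ℕ in atTop, max (max (‖z‖^3) (4*‖z‖)) (4*‖z‖^3) ≤ (n:ℝ) := by
    filter_upwards [eventually_ge_atTop ⌈max (max (‖z‖^3) (4*‖z‖)) (4*‖z‖^3)⌉₊] with n hn
    calc max (max (‖z‖^3) (4*‖z‖)) (4*‖z‖^3) ≤ (⌈max (max (‖z‖^3) (4*‖z‖)) (4*‖z‖^3)⌉₊ : ℝ) :=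
          Nat.le_ceil _
      _ ≤ (n:ℝ) := by exact_mod_cast hn
  filter_upwards [hc] with n hn
  simp only [max_le_iff] at hn
  obtain ⟨⟨ha, hb⟩, hcc⟩ := hn
  have h1 : ‖z‖^3 ≤ (n:ℝ)+1 := by linarith
  have h2 : 4*‖z‖ ≤ (n:ℝ)+1 := by linarith
  have h3 : 4*‖z‖^3 ≤ (n:ℝ)+1 := by linarith
  refine ⟨g_sub_one_bound h1 h2, ?_⟩
  have := g_sub_one_bound h1 h2
  have hn1 : (0:ℝ) < (n:ℝ)+1 := by positivity
  have : 2*‖z‖^3 / ((n:ℝ)+1)^2 ≤ 1/2 := by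
    rw [div_le_iff₀ (by positivity)]
    nlinarith [norm_nonneg z, pow_nonneg (norm_nonneg z) 3]
  linarith [g_sub_one_bound h1 h2]

lemma summable_aux (c : ℝ) : Summable (fun n : ℕ => c / ((n:ℝ)+1)^2) := by
  have h : Summable (fun n : ℕ => 1/((n:ℝ)+1)^2) := by
    have := (summable_nat_add_iff 1).mpr (Real.summable_one_div_nat_pow.mpr (by norm_num : 1 < 2))
    refine this.congr fun n => ?_
    push_cast
    ring
  simpa [div_eq_mul_inv, mul_comm] using h.mul_left c

lemma summable_log_g (z : ℂ) : Summable (fun n => Complex.log (g z n)) := by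
  apply Summable.of_norm_bounded_eventually (g := fun n : ℕ => 3*‖z‖^3 / ((n:ℝ)+1)^2) (summable_aux _)
  rw [Nat.cofinite_eq_atTop]
  filter_upwards [eventually_bound z] with n hn
  have h1 := hn.1
  have h2 := hn.2
  have : Complex.log (g z n) = Complex.log (1 + (g z n - 1)) := by ring_nf
  rw [this]
  calc ‖Complex.log (1 + (g z n - 1))‖ ≤ (3/2) * ‖g z n - 1‖ :=
        Complex.norm_log_one_add_half_le_self h2
    _ ≤ (3/2) * (2*‖z‖^3 / ((n:ℝ)+1)^2) := by gcongr
    _ = 3*‖z‖^3 / ((n:ℝ)+1)^2 := by ring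

lemma hasProd_zero_of_exists {f : ℕ → ℂ} {i : ℕ} (h : f i = 0) : HasProd f 0 := by
  have hev : ∀ᶠ s : Finset ℕ in atTop, (0:ℂ) = ∏ j ∈ s, f j := by
    filter_upwards [eventually_ge_atTop ({i} : Finset ℕ)] with s hs
    exact (Finset.prod_eq_zero (hs (Finset.mem_singleton_self i)) h).symm
  exact Tendsto.congr' hev tendsto_const_nhds

lemma multipliable_g (z : ℂ) : Multipliable (g z) := by
  by_cases hz : ∃ n, g z n = 0
  · obtain ⟨n, hn⟩ := hz
    exact ⟨0, hasProd_zero_of_exists hn⟩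
  · push_neg at hz
    exact Complex.multipliable_of_summable_log (summable_log_g z)

lemma tendsto_GP (z : ℂ) :
    Tendsto (fun N => ∏ n ∈ range N, g z n) atTop (𝓝 (P z)) :=
  (multipliable_g z).hasProd.tendsto_prod_nat

noncomputable def B (N : ℕ) (z : ℂ) : ℂ := ∏ k ∈ range N, ((k:ℂ) + 1 + z) ^ (k+1)

noncomputable def Bodd (N : ℕ) (x : ℂ) : ℂ := ∏ k ∈ range N, (2*(k:ℂ) + 1 + 2*x) ^ (2*k+1)

noncomputable def F (N : ℕ) : ℂ := ∏ k ∈ range N, ((k:ℂ) + 1) ^ (k+1)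

noncomputable def Hc (N : ℕ) : ℂ := ∑ k ∈ range N, ((k:ℂ) + 1)⁻¹

lemma prod_g (z : ℂ) (N : ℕ) :
    (∏ n ∈ range N, g z n) * F N = B N z * Complex.exp (z^2/2 * Hc N - z*N) := by
  induction N with
  | zero => simp [F, B, Hc]
  | succ N ih =>
    have hne : ((N:ℂ)+1) ≠ 0 := ncast_ne
    have key : g z N * ((N:ℂ)+1)^(N+1)
        = ((N:ℂ)+1+z)^(N+1) * Complex.exp (z^2/(2*((N:ℂ)+1)) - z) := by
      rw [g]
      have h1 : (1 + z / ((N:ℂ)+1))^(N+1) * ((N:ℂ)+1)^(N+1) = ((N:ℂ)+1+z)^(N+1) := by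
        rw [← mul_pow]
        congr 1
        field_simp
      calc (1 + z / ((N:ℂ)+1))^(N+1) * Complex.exp (z^2/(2*((N:ℂ)+1)) - z) * ((N:ℂ)+1)^(N+1)
          = ((1 + z / ((N:ℂ)+1))^(N+1) * ((N:ℂ)+1)^(N+1)) * Complex.exp (z^2/(2*((N:ℂ)+1)) - z) := by
            ring
        _ = ((N:ℂ)+1+z)^(N+1) * Complex.exp (z^2/(2*((N:ℂ)+1)) - z) := by rw [h1]
    calc (∏ n ∈ range (N+1), g z n) * F (N+1)
        = ((∏ n ∈ range N, g z n) * F N) * (g z N * ((N:ℂ)+1)^(N+1)) := by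
          simp only [F, prod_range_succ]; ring
      _ = B N z * Complex.exp (z^2/2 * Hc N - z*N)
            * (((N:ℂ)+1+z)^(N+1) * Complex.exp (z^2/(2*((N:ℂ)+1)) - z)) := by rw [ih, key]
      _ = B (N+1) z * Complex.exp (z^2/2 * Hc (N+1) - z*((N+1:ℕ):ℂ)) := by
          simp only [B, Hc, prod_range_succ, sum_range_succ]
          rw [show z ^ 2 / 2 * ((∑ k ∈ range N, ((k:ℂ)+1)⁻¹) + ((N:ℂ)+1)⁻¹) - z*(((N+1:ℕ):ℂ))
              = (z ^ 2 / 2 * (∑ k ∈ range N, ((k:ℂ)+1)⁻¹) - z*(N:ℂ)) + (z^2/(2*((N:ℂ)+1)) - z) from by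
            push_cast
            field_simp
            ring, Complex.exp_add]
          ring

lemma E1 (N : ℕ) (x : ℂ) : B (2*N) (2*x) = 2^(N*(N+1)) * (B N x)^2 * Bodd N x := by
  induction N with
  | zero => simp [B, Bodd]
  | succ N ih =>
    have h2 : 2*(N+1) = (2*N) + 1 + 1 := by ring
    rw [h2]
    simp only [B, Bodd, prod_range_succ] at ih ⊢
    rw [ih]
    have c1 : ((↑(2*N) : ℂ) + 1 + 2*x) = 2*(N:ℂ) + 1 + 2*x := by push_cast; ring
    have c2 : ((↑(2*N+1) : ℂ) + 1 + 2*x) = 2*((N:ℂ) + 1 + x) := by push_cast; ring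
    rw [c1, c2, mul_pow 2 ((N:ℂ)+1+x) (2*N+1+1)]
    have c3 : ((N:ℂ)+1+x)^(2*N+1+1) = (((N:ℂ)+1+x)^(N+1))^2 := by
      rw [← pow_mul]
      congr 1
      ring
    have c5 : (2:ℂ)^((N+1)*(N+1+1)) = 2^(N*(N+1)) * 2^(2*N+1+1) := by
      rw [← pow_add]
      congr 1
      ring
    rw [c3, c5]
    ring

lemma E2 (N : ℕ) (x : ℂ) :
    Bodd N x * (((N:ℕ):ℂ) + x + 1/2)^N = 2^(N^2) * B N (x - 1/2) * B N (x + 1/2) := by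
  induction N with
  | zero => simp [Bodd, B]
  | succ N ih =>
    simp only [Bodd, B, prod_range_succ] at ih ⊢
    have c0 : (((N+1:ℕ):ℂ) + x + 1/2) = ((N:ℂ) + x + 1/2) + 1 := by push_cast; ring
    have s1 : (2*(N:ℂ) + 1 + 2*x)^(2*N+1) = 2^(2*N+1) * ((N:ℂ) + x + 1/2)^(2*N+1) := by
      rw [← mul_pow]; congr 1; ring
    have s2 : ((N:ℂ) + x + 1/2)^(2*N+1) = ((N:ℂ) + x + 1/2)^N * ((N:ℂ) + x + 1/2)^(N+1) := by
      rw [← pow_add]; congr 1; ring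
    have s3 : (2:ℂ)^((N+1)^2) = 2^(N^2) * 2^(2*N+1) := by rw [← pow_add]; congr 1; ring
    have c2 : ((N:ℂ) + 1 + (x - 1/2)) = ((N:ℂ) + x + 1/2) := by ring
    have c3 : ((N:ℂ) + 1 + (x + 1/2)) = ((N:ℂ) + x + 1/2) + 1 := by ring
    rw [c0, s1, s2, s3, c2, c3]
    linear_combination (2^(2*N+1) * ((N:ℂ) + x + 1/2)^(N+1) * (((N:ℂ) + x + 1/2) + 1)^(N+1)) * ih

lemma Ccore (N : ℕ) (x : ℂ) :
    B (2*N) (2*x) * (((N:ℕ):ℂ) + x + 1/2)^N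
      = 2^(2*N^2 + N) * (B N x)^2 * B N (x - 1/2) * B N (x + 1/2) := by
  calc B (2*N) (2*x) * (((N:ℕ):ℂ) + x + 1/2)^N
      = 2^(N*(N+1)) * (B N x)^2 * (Bodd N x * (((N:ℕ):ℂ) + x + 1/2)^N) := by rw [E1]; ring
    _ = 2^(N*(N+1)) * (B N x)^2 * (2^(N^2) * B N (x - 1/2) * B N (x + 1/2)) := by rw [E2]
    _ = 2^(2*N^2 + N) * (B N x)^2 * B N (x - 1/2) * B N (x + 1/2) := by
        rw [show 2*N^2 + N = N*(N+1) + N^2 by ring, pow_add]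
        ring

def OddN (N : ℕ) : ℕ := ∏ k ∈ range N, (2*k+1)

lemma R2 (N : ℕ) : OddN N * 2^N * Nat.factorial N = Nat.factorial (2*N) := by
  induction N with
  | zero => simp [OddN]
  | succ N ih =>
    have h : 2*(N+1) = (2*N+1)+1 := by ring
    rw [h, Nat.factorial_succ, Nat.factorial_succ]
    simp only [OddN, prod_range_succ] at ih ⊢
    calc (∏ k ∈ range N, (2*k+1)) * (2*N+1) * 2^(N+1) * ((N+1) * Nat.factorial N)
        = (2*N+1+1) * ((2*N+1) * ((∏ k ∈ range N, (2*k+1)) * 2^N * Nat.factorial N)) := by ring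
      _ = (2*N+1+1) * ((2*N+1) * Nat.factorial (2*N)) := by rw [ih]
      _ = _ := by rw [← Nat.factorial_succ]

lemma R1c (N : ℕ) : (2:ℂ)^(2*N^2+2*N) * (B N (-(1/2)))^2 * (F N)^2 = F (2*N) * (OddN N : ℂ) := by
  induction N with
  | zero => simp [B, F, OddN]
  | succ N ih =>
    have h2 : 2*(N+1) = (2*N) + 1 + 1 := by ring
    rw [h2]
    simp only [B, F, OddN, prod_range_succ] at ih ⊢
    push_cast at ih ⊢
    have c1 : ((2*(N:ℂ)) + 1) = 2*((N:ℂ)+1/2) := by ring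
    have c2 : ((2*(N:ℂ)+1) + 1) = 2*((N:ℂ)+1) := by ring
    rw [c2, c1, mul_pow 2 ((N:ℂ)+1/2) (2*N+1), mul_pow 2 ((N:ℂ)+1) (2*N+1+1)]
    have d1 : ((N:ℂ)+1/2)^(2*N+1) * (2*((N:ℂ)+1/2)) = 2 * (((N:ℂ)+1/2)^(N+1))^2 := by
      rw [← pow_mul]
      rw [show (N+1)*2 = (2*N+1)+1 by ring, pow_succ]
      ring
    have d2 : ((N:ℂ)+1)^(2*N+1+1) = (((N:ℂ)+1)^(N+1))^2 := by
      rw [← pow_mul]; congr 1; ring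
    have d3 : (2:ℂ)^(2*(N+1)^2+(2*N+1+1)) = 2^(2*N^2+2*N) * (2^(2*N+1) * (2^(2*N+1+1) * 2)) := by
      rw [← pow_succ, ← pow_add, ← pow_add]; congr 1; ring
    have d4 : ((N:ℂ)+1+-(1/2)) = ((N:ℂ)+1/2) := by ring
    rw [d2, d3, d4]
    linear_combination (2^(2*N+1) * (2^(2*N+1+1) * 2) * ((((N:ℂ)+1/2)^(N+1))^2 * (((N:ℂ)+1)^(N+1))^2)) * ih
      - ((∏ k ∈ range (2*N), ((k:ℂ)+1)^(k+1)) * 2^(2*N+1) * 2^(2*N+1+1) * (((N:ℂ)+1)^(N+1))^2 * (∏ x ∈ range N, (2*(x:ℂ)+1))) * d1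

noncomputable def S (N : ℕ) : ℝ := Real.sqrt 2 * Stirling.stirlingSeq (2*N) / Stirling.stirlingSeq N

lemma stirling_pos {N : ℕ} (h : 1 ≤ N) : 0 < Stirling.stirlingSeq N := by
  rw [Stirling.stirlingSeq]
  have h1 : (0:ℝ) < N := by exact_mod_cast h
  positivity

lemma R3x {N : ℕ} (h : 1 ≤ N) :
    (OddN N : ℝ) * Real.exp 1 ^ N * Stirling.stirlingSeq N
      = Real.sqrt 2 * Stirling.stirlingSeq (2*N) * ((N:ℝ)^N * 2^N) := by
  have hN : (0:ℝ) < N := by exact_mod_cast h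
  have hs2 : Real.sqrt (2*(N:ℝ)) = Real.sqrt 2 * Real.sqrt N := Real.sqrt_mul (by norm_num) _
  have hs4 : Real.sqrt (2*((2*N:ℕ):ℝ)) = 2 * Real.sqrt N := by
    push_cast
    rw [show (2:ℝ)*(2*(N:ℝ)) = 2^2*(N:ℝ) by ring, Real.sqrt_mul (by norm_num),
      Real.sqrt_sq (by norm_num)]
  have hfac : ((Nat.factorial (2*N) : ℕ) : ℝ) = (OddN N : ℝ) * 2^N * (Nat.factorial N : ℝ) := by
    rw [← R2]
    push_cast
    ring
  have hpow : (((2*N:ℕ):ℝ) / Real.exp 1) ^ (2*N)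
      = (2^N * (N:ℝ)^N * ((N:ℝ)^N / (Real.exp 1^N * Real.exp 1^N))) * 2^N := by
    push_cast
    rw [show 2*N = N+N by ring, pow_add, div_pow, mul_pow]
    field_simp
  rw [Stirling.stirlingSeq, Stirling.stirlingSeq, hs2, hs4, hfac, hpow]
  have hsqN : (0:ℝ) < Real.sqrt N := Real.sqrt_pos.mpr hN
  have hsq2 : (0:ℝ) < Real.sqrt 2 := by positivity
  have hfN : (0:ℝ) < (Nat.factorial N : ℝ) := by exact_mod_cast Nat.factorial_pos N
  have hder : ((N:ℝ) / Real.exp 1) ^ N = (N:ℝ)^N / Real.exp 1^N := div_pow _ _ _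
  rw [hder]
  have hexp : (0:ℝ) < Real.exp 1 ^ N := by positivity
  have hNN : (0:ℝ) < (N:ℝ)^N := by positivity
  field_simp
  ring_nf
  rw [Real.sq_sqrt (by norm_num : (0:ℝ) ≤ 2)]

lemma R3core {N : ℕ} (h : 1 ≤ N) :
    (OddN N : ℝ) * Real.exp N = S N * ((N:ℝ)^N * 2^N) := by
  have hs := stirling_pos h
  have he : Real.exp (N:ℝ) = Real.exp 1 ^ N := by
    rw [← Real.exp_nat_mul, mul_one]
  rw [S, div_mul_eq_mul_div, eq_div_iff hs.ne', he]
  linear_combination R3x h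

lemma tendsto_double : Tendsto (fun N : ℕ => 2*N) atTop atTop :=
  tendsto_atTop_mono (fun n => by simpa using Nat.le_mul_of_pos_left n (by norm_num : 0 < 2))
    tendsto_id

noncomputable def hr (N : ℕ) : ℝ := ∑ k ∈ range N, ((k:ℝ)+1)⁻¹

lemma hr_eq (N : ℕ) : hr N = ((harmonic N : ℚ) : ℝ) := by
  rw [hr, harmonic]
  push_cast
  rfl

lemma tendsto_hr : Tendsto (fun N : ℕ => hr (2*N) - hr N) atTop (𝓝 (Real.log 2)) := by
  have h1 := Real.tendsto_harmonic_sub_log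
  have h3 := h1.comp tendsto_double
  have h4 := (h3.sub h1).add_const (Real.log 2)
  rw [show Real.eulerMascheroniConstant - Real.eulerMascheroniConstant + Real.log 2 = Real.log 2
    from by ring] at h4
  apply h4.congr'
  filter_upwards [eventually_ge_atTop 1] with N hN
  have hN0 : ((N:ℝ)) ≠ 0 := by positivity
  have : Real.log ((2*N : ℕ) : ℝ) = Real.log 2 + Real.log N := by
    push_cast
    rw [Real.log_mul (by norm_num) hN0]
  simp only [Function.comp]
  rw [hr_eq, hr_eq, this]
  ring

lemma sqrt_pi_ne : Real.sqrt π ≠ 0 := by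
  positivity

lemma tendsto_S : Tendsto S atTop (𝓝 (Real.sqrt 2)) := by
  have hst := Stirling.tendsto_stirlingSeq_sqrt_pi
  have h2 := hst.comp tendsto_double
  have hd := h2.div hst sqrt_pi_ne
  rw [div_self sqrt_pi_ne] at hd
  have := hd.const_mul (Real.sqrt 2)
  rw [mul_one] at this
  apply this.congr
  intro N
  simp only [Pi.div_apply, Function.comp_apply, S]
  ring

lemma tendsto_nlog (a : ℂ) :
    Tendsto (fun N : ℕ => (N:ℂ) * Complex.log (1 + a/(N:ℂ))) atTop (𝓝 a) := by
  have key : Tendsto (fun N : ℕ => (N:ℂ) * Complex.log (1 + a/(N:ℂ)) - a) atTop (𝓝 0) := by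
    apply squeeze_zero_norm' (a := fun N : ℕ => ‖a‖^2 / N)
    · have hc : ∀ᶠ N : ℕ in atTop, 1 ≤ N ∧ 4*‖a‖ ≤ (N:ℝ) := by
        filter_upwards [eventually_ge_atTop (max 1 ⌈4*‖a‖⌉₊)] with N hN
        constructor
        · exact le_trans (le_max_left _ _) hN
        · calc 4*‖a‖ ≤ (⌈4*‖a‖⌉₊ : ℝ) := Nat.le_ceil _
            _ ≤ (N:ℝ) := by exact_mod_cast le_trans (le_max_right _ _) hN
      filter_upwards [hc] with N hN
      obtain ⟨h1, h2⟩ := hN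
      have hNr : (0:ℝ) < (N:ℝ) := by exact_mod_cast h1
      have hNc : (N:ℂ) ≠ 0 := by
        simp only [ne_eq, Nat.cast_eq_zero]
        omega
      have hw : ‖a/(N:ℂ)‖ = ‖a‖/(N:ℝ) := by rw [norm_div, Complex.norm_natCast]
      have hwle : ‖a/(N:ℂ)‖ ≤ 1/4 := by
        rw [hw, div_le_iff₀ hNr]
        linarith
      have hwlt : ‖a/(N:ℂ)‖ < 1 := lt_of_le_of_lt hwle (by norm_num)
      have hlog := Complex.norm_log_one_add_sub_self_le hwlt
      have hNa : (N:ℂ) * (a/(N:ℂ)) = a := by field_simp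
      have hwle' : ‖a‖/(N:ℝ) ≤ 1/4 := by rw [← hw]; exact hwle
      have ht0 : (0:ℝ) < 1 - ‖a‖/(N:ℝ) := by linarith
      have ht43 : (1 - ‖a‖/(N:ℝ))⁻¹ ≤ 4/3 := by
        rw [inv_le_comm₀ ht0 (by norm_num)]
        linarith
      have ht0' : (0:ℝ) ≤ (1 - ‖a‖/(N:ℝ))⁻¹ := by positivity
      have hA : (0:ℝ) ≤ ‖a‖^2 := by positivity
      calc ‖(N:ℂ) * Complex.log (1 + a/(N:ℂ)) - a‖
          = ‖(N:ℂ) * (Complex.log (1 + a/(N:ℂ)) - a/(N:ℂ))‖ := by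
            rw [mul_sub, hNa]
        _ = (N:ℝ) * ‖Complex.log (1 + a/(N:ℂ)) - a/(N:ℂ)‖ := by
            rw [norm_mul, Complex.norm_natCast]
        _ ≤ (N:ℝ) * (‖a/(N:ℂ)‖^2 * (1 - ‖a/(N:ℂ)‖)⁻¹ / 2) :=
            mul_le_mul_of_nonneg_left hlog (le_of_lt hNr)
        _ = ‖a‖^2 * (1 - ‖a‖/(N:ℝ))⁻¹ / (2*(N:ℝ)) := by
            have e1 : ∀ t : ℝ, (N:ℝ) * ((‖a‖/(N:ℝ))^2 * t / 2) = ‖a‖^2 * t / (2*(N:ℝ)) := by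
              intro t
              field_simp
            rw [hw]
            exact e1 _
        _ ≤ ‖a‖^2 / N := by
            rw [div_le_div_iff₀ (by positivity) hNr]
            nlinarith [mul_le_mul_of_nonneg_right (mul_le_mul_of_nonneg_left ht43 hA)
              (le_of_lt hNr)]
    · exact tendsto_const_div_atTop_nhds_zero_nat _
  have h2 := key.add_const a
  rw [zero_add] at h2
  exact h2.congr (fun N => by ring)

lemma tendsto_one_add_div_pow (a : ℂ) :
    Tendsto (fun N : ℕ => (1 + a/(N:ℂ))^N) atTop (𝓝 (Complex.exp a)) := by
  have h1 := (Complex.continuous_exp.tendsto a).comp (tendsto_nlog a)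
  apply h1.congr'
  have hc : ∀ᶠ N : ℕ in atTop, 1 ≤ N ∧ 2*‖a‖ ≤ (N:ℝ) := by
    filter_upwards [eventually_ge_atTop (max 1 ⌈2*‖a‖⌉₊)] with N hN
    refine ⟨le_trans (le_max_left _ _) hN, ?_⟩
    calc 2*‖a‖ ≤ (⌈2*‖a‖⌉₊ : ℝ) := Nat.le_ceil _
      _ ≤ (N:ℝ) := by exact_mod_cast le_trans (le_max_right _ _) hN
  filter_upwards [hc] with N hN
  obtain ⟨h1', h2⟩ := hN
  have hNr : (0:ℝ) < (N:ℝ) := by exact_mod_cast h1'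
  have hw : ‖a/(N:ℂ)‖ < 1 := by
    rw [norm_div, Complex.norm_natCast, div_lt_one hNr]
    linarith [norm_nonneg a]
  have h0 : (1:ℂ) + a/(N:ℂ) ≠ 0 := one_add_ne_zero hw
  simp only [Function.comp]
  rw [Complex.exp_nat_mul, Complex.exp_log h0]

lemma expEq (N : ℕ) (x : ℂ) :
    Complex.exp ((2*x)^2/2 * Hc (2*N) - (2*x)*((2*N : ℕ):ℂ)) *
      (Complex.exp ((-(1/2):ℂ)^2/2 * Hc N - (-(1/2):ℂ)*(N:ℂ)))^2
    = Complex.exp ((N:ℂ) + 2*x^2*(Hc (2*N) - Hc N)) *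
        (Complex.exp ((x-1/2)^2/2 * Hc N - (x-1/2)*(N:ℂ)) *
          (Complex.exp (x^2/2 * Hc N - x*(N:ℂ)))^2 *
          Complex.exp ((x+1/2)^2/2 * Hc N - (x+1/2)*(N:ℂ))) := by
  simp only [pow_two, ← Complex.exp_add]
  congr 1
  push_cast
  ring

lemma keyN (N : ℕ) (x : ℂ) :
    (∏ n ∈ range (2*N), g (2*x) n) * (∏ n ∈ range N, g (-(1/2)) n)^2 *
      ((((N:ℕ):ℂ) + x + 1/2)^N * (F (2*N) * F N ^ 2))
    = (2^(2*N^2+N) * (B N (-(1/2)))^2 * Complex.exp ((N:ℂ) + 2*x^2*(Hc (2*N) - Hc N))) *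
        ((∏ n ∈ range N, g (x-1/2) n) * (∏ n ∈ range N, g x n)^2 *
          (∏ n ∈ range N, g (x+1/2) n)) * F N ^ 4 := by
  have h1 := prod_g (2*x) (2*N)
  have h2 := prod_g (-(1/2)) N
  have h3 := prod_g (x-1/2) N
  have h4 := prod_g x N
  have h5 := prod_g (x+1/2) N
  have hC := Ccore N x
  have hE := expEq N x
  calc (∏ n ∈ range (2*N), g (2*x) n) * (∏ n ∈ range N, g (-(1/2)) n)^2 *
      ((((N:ℕ):ℂ) + x + 1/2)^N * (F (2*N) * F N ^ 2))
      = ((∏ n ∈ range (2*N), g (2*x) n) * F (2*N)) *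
          ((∏ n ∈ range N, g (-(1/2)) n) * F N)^2 * (((N:ℕ):ℂ) + x + 1/2)^N := by ring
    _ = (B (2*N) (2*x) * Complex.exp ((2*x)^2/2 * Hc (2*N) - (2*x)*((2*N : ℕ):ℂ))) *
          ((B N (-(1/2)) * Complex.exp ((-(1/2):ℂ)^2/2 * Hc N - (-(1/2):ℂ)*(N:ℂ))))^2 *
          (((N:ℕ):ℂ) + x + 1/2)^N := by rw [h1, h2]
    _ = (B (2*N) (2*x) * (((N:ℕ):ℂ) + x + 1/2)^N) * (B N (-(1/2)))^2 *
          (Complex.exp ((2*x)^2/2 * Hc (2*N) - (2*x)*((2*N : ℕ):ℂ)) *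
            (Complex.exp ((-(1/2):ℂ)^2/2 * Hc N - (-(1/2):ℂ)*(N:ℂ)))^2) := by ring
    _ = (2^(2*N^2+N) * (B N x)^2 * B N (x-1/2) * B N (x+1/2)) * (B N (-(1/2)))^2 *
          (Complex.exp ((N:ℂ) + 2*x^2*(Hc (2*N) - Hc N)) *
            (Complex.exp ((x-1/2)^2/2 * Hc N - (x-1/2)*(N:ℂ)) *
              (Complex.exp (x^2/2 * Hc N - x*(N:ℂ)))^2 *
              Complex.exp ((x+1/2)^2/2 * Hc N - (x+1/2)*(N:ℂ)))) := by rw [hC, hE]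
    _ = (2^(2*N^2+N) * (B N (-(1/2)))^2 * Complex.exp ((N:ℂ) + 2*x^2*(Hc (2*N) - Hc N))) *
          (((B N (x-1/2) * Complex.exp ((x-1/2)^2/2 * Hc N - (x-1/2)*(N:ℂ)))) *
            ((B N x * Complex.exp (x^2/2 * Hc N - x*(N:ℂ))))^2 *
            ((B N (x+1/2) * Complex.exp ((x+1/2)^2/2 * Hc N - (x+1/2)*(N:ℂ))))) := by ring
    _ = (2^(2*N^2+N) * (B N (-(1/2)))^2 * Complex.exp ((N:ℂ) + 2*x^2*(Hc (2*N) - Hc N))) *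
          (((∏ n ∈ range N, g (x-1/2) n) * F N) * ((∏ n ∈ range N, g x n) * F N)^2 *
            ((∏ n ∈ range N, g (x+1/2) n) * F N)) := by rw [h3, h4, h5]
    _ = _ := by ring

lemma F_ne (N : ℕ) : F N ≠ 0 :=
  Finset.prod_ne_zero_iff.mpr (fun k _ => pow_ne_zero _ ncast_ne)

lemma SCc {N : ℕ} (h : 1 ≤ N) :
    2^(2*N^2+N) * (B N (-(1/2)))^2 * Complex.exp ((N:ℂ)) * F N^4
      = ((S N : ℝ) : ℂ) * ((N:ℂ)^N * (F (2*N) * F N^2)) := by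
  have hC : ((OddN N : ℕ):ℂ) * Complex.exp ((N:ℂ)) = ((S N:ℝ):ℂ) * ((N:ℂ)^N * 2^N) := by
    have := R3core h
    have h2 := congrArg (fun t : ℝ => (t : ℂ)) this
    push_cast at h2
    exact_mod_cast h2
  have h2N : ((2:ℂ)^N) ≠ 0 := pow_ne_zero _ two_ne_zero
  apply mul_right_cancel₀ h2N
  calc 2^(2*N^2+N) * (B N (-(1/2)))^2 * Complex.exp ((N:ℂ)) * F N^4 * 2^N
      = (2^(2*N^2+2*N) * (B N (-(1/2)))^2 * F N^2) * (F N^2 * Complex.exp ((N:ℂ))) := by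
        rw [show 2*N^2+2*N = (2*N^2+N)+N by ring, pow_add]
        ring
    _ = (F (2*N) * (OddN N : ℂ)) * (F N^2 * Complex.exp ((N:ℂ))) := by rw [R1c]
    _ = (F (2*N) * F N^2) * ((OddN N : ℂ) * Complex.exp ((N:ℂ))) := by ring
    _ = (F (2*N) * F N^2) * (((S N:ℝ):ℂ) * ((N:ℂ)^N * 2^N)) := by rw [hC]
    _ = _ := by ring

lemma Mfin {N : ℕ} (h : 1 ≤ N) (x : ℂ) :
    (∏ n ∈ range (2*N), g (2*x) n) * (∏ n ∈ range N, g (-(1/2)) n)^2 *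
        (1 + (x + 1/2)/(N:ℂ))^N
      = ((S N : ℝ) : ℂ) * Complex.exp (2*x^2*(Hc (2*N) - Hc N)) *
          ((∏ n ∈ range N, g (x-1/2) n) * (∏ n ∈ range N, g x n)^2 *
            (∏ n ∈ range N, g (x+1/2) n)) := by
  have hNc : (N:ℂ) ≠ 0 := Nat.cast_ne_zero.mpr (by omega)
  have hcan : (N:ℂ)^N * (F (2*N) * F N^2) ≠ 0 :=
    mul_ne_zero (pow_ne_zero _ hNc) (mul_ne_zero (F_ne _) (pow_ne_zero _ (F_ne _)))
  apply mul_right_cancel₀ hcan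
  have hpow : (1 + (x + 1/2)/(N:ℂ))^N * (N:ℂ)^N = (((N:ℕ):ℂ) + x + 1/2)^N := by
    rw [← mul_pow]
    congr 1
    field_simp
    ring
  calc (∏ n ∈ range (2*N), g (2*x) n) * (∏ n ∈ range N, g (-(1/2)) n)^2 *
        (1 + (x + 1/2)/(N:ℂ))^N * ((N:ℂ)^N * (F (2*N) * F N^2))
      = (∏ n ∈ range (2*N), g (2*x) n) * (∏ n ∈ range N, g (-(1/2)) n)^2 *
        (((1 + (x + 1/2)/(N:ℂ))^N * (N:ℂ)^N) * (F (2*N) * F N^2)) := by ring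
    _ = (∏ n ∈ range (2*N), g (2*x) n) * (∏ n ∈ range N, g (-(1/2)) n)^2 *
        ((((N:ℕ):ℂ) + x + 1/2)^N * (F (2*N) * F N^2)) := by rw [hpow]
    _ = (2^(2*N^2+N) * (B N (-(1/2)))^2 * Complex.exp ((N:ℂ) + 2*x^2*(Hc (2*N) - Hc N))) *
          ((∏ n ∈ range N, g (x-1/2) n) * (∏ n ∈ range N, g x n)^2 *
            (∏ n ∈ range N, g (x+1/2) n)) * F N ^ 4 := keyN N x
    _ = (2^(2*N^2+N) * (B N (-(1/2)))^2 * Complex.exp ((N:ℂ)) * F N^4) *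
          Complex.exp (2*x^2*(Hc (2*N) - Hc N)) *
          ((∏ n ∈ range N, g (x-1/2) n) * (∏ n ∈ range N, g x n)^2 *
            (∏ n ∈ range N, g (x+1/2) n)) := by
        rw [Complex.exp_add]
        ring
    _ = _ := by
        rw [SCc h]
        ring

lemma Hc_eq (N : ℕ) : Hc N = ((hr N : ℝ) : ℂ) := by
  rw [Hc, hr]
  push_cast
  rfl

lemma KEY (x : ℂ) :
    P (2*x) * P (-(1/2))^2 * Complex.exp (x + 1/2)
      = ((Real.sqrt 2 : ℝ) : ℂ) * Complex.exp (2*x^2*((Real.log 2 : ℝ):ℂ)) *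
          (P (x-1/2) * P x^2 * P (x+1/2)) := by
  have TL : Tendsto (fun N : ℕ => (∏ n ∈ range (2*N), g (2*x) n) *
      (∏ n ∈ range N, g (-(1/2)) n)^2 * (1 + (x + 1/2)/(N:ℂ))^N) atTop
      (𝓝 (P (2*x) * P (-(1/2))^2 * Complex.exp (x + 1/2))) := by
    exact (((tendsto_GP (2*x)).comp tendsto_double).mul
      ((tendsto_GP (-(1/2))).pow 2)).mul (tendsto_one_add_div_pow (x + 1/2))
  have hS : Tendsto (fun N => ((S N : ℝ):ℂ)) atTop (𝓝 ((Real.sqrt 2 : ℝ):ℂ)) :=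
    (Complex.continuous_ofReal.tendsto _).comp tendsto_S
  have hHr : Tendsto (fun N : ℕ => ((hr (2*N) - hr N : ℝ):ℂ)) atTop
      (𝓝 ((Real.log 2 : ℝ):ℂ)) :=
    (Complex.continuous_ofReal.tendsto _).comp tendsto_hr
  have hH : Tendsto (fun N : ℕ => Complex.exp (2*x^2*(Hc (2*N) - Hc N))) atTop
      (𝓝 (Complex.exp (2*x^2*((Real.log 2 : ℝ):ℂ)))) := by
    have h1 : Tendsto (fun N : ℕ => 2*x^2*((hr (2*N) - hr N : ℝ):ℂ)) atTop
        (𝓝 (2*x^2*((Real.log 2 : ℝ):ℂ))) := hHr.const_mul _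
    have h2 := (Complex.continuous_exp.tendsto _).comp h1
    apply h2.congr
    intro N
    simp only [Function.comp_apply, Hc_eq]
    norm_num
  have TR : Tendsto (fun N : ℕ => ((S N : ℝ):ℂ) * Complex.exp (2*x^2*(Hc (2*N) - Hc N)) *
      ((∏ n ∈ range N, g (x-1/2) n) * (∏ n ∈ range N, g x n)^2 *
        (∏ n ∈ range N, g (x+1/2) n))) atTop
      (𝓝 (((Real.sqrt 2 : ℝ):ℂ) * Complex.exp (2*x^2*((Real.log 2 : ℝ):ℂ)) *
        (P (x-1/2) * P x^2 * P (x+1/2)))) :=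
    (hS.mul hH).mul (((tendsto_GP (x-1/2)).mul ((tendsto_GP x).pow 2)).mul
      (tendsto_GP (x+1/2)))
  have heq : (fun N : ℕ => (∏ n ∈ range (2*N), g (2*x) n) *
      (∏ n ∈ range N, g (-(1/2)) n)^2 * (1 + (x + 1/2)/(N:ℂ))^N) =ᶠ[atTop]
      (fun N : ℕ => ((S N : ℝ):ℂ) * Complex.exp (2*x^2*(Hc (2*N) - Hc N)) *
      ((∏ n ∈ range N, g (x-1/2) n) * (∏ n ∈ range N, g x n)^2 *
        (∏ n ∈ range N, g (x+1/2) n))) := by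
    filter_upwards [eventually_ge_atTop 1] with N hN
    exact Mfin hN x
  exact tendsto_nhds_unique (TL.congr' heq) TR

lemma barnesG_eq (z : ℂ) :
    barnesG (1 + z) = (2 * (π : ℂ)) ^ (z / 2) *
      Complex.exp (-(z + z ^ 2 * (1 + (Real.eulerMascheroniConstant : ℂ))) / 2) * P z := by
  simp only [barnesG, P, g, add_sub_cancel_left]

lemma cpow2pi (s : ℂ) : (2 * (π : ℂ)) ^ s = Complex.exp (s * ((Real.log (2*π) : ℝ):ℂ)) := by
  have h : (2 * (π : ℂ)) = ((2*π : ℝ):ℂ) := by push_cast; ring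
  have hpos : (0:ℝ) < 2*π := by positivity
  rw [h, Complex.cpow_def_of_ne_zero (by exact_mod_cast hpos.ne')]
  rw [← Complex.ofReal_log hpos.le, mul_comm]

lemma sqrt2_exp : ((Real.sqrt 2 : ℝ):ℂ) = Complex.exp (((Real.log 2 : ℝ):ℂ)/2) := by
  have h : Real.sqrt 2 = Real.exp (Real.log 2 / 2) := by
    rw [← Real.log_sqrt (by norm_num), Real.exp_log (Real.sqrt_pos.mpr (by norm_num))]
  rw [h]
  push_cast [Complex.ofReal_exp]
  norm_num

lemma log2pi : ((Real.log (2*π) : ℝ):ℂ) = ((Real.log 2 : ℝ):ℂ) + ((Real.log π : ℝ):ℂ) := by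
  rw [Real.log_mul (by norm_num) Real.pi_ne_zero]
  push_cast
  ring

end BarnesAux

open BarnesAux in
/-- doubling identity for the Barnes G-function:
`G(1+2x)·G(1/2)² = 2^{x(2x−1)}·π^{−x−1/2}·G(1/2+x)·G(1+x)²·G(3/2+x)`. -/
theorem barnesG_doubling (x : ℂ) :
    barnesG (1 + 2 * x) * barnesG (1 / 2) ^ 2 =
      Complex.exp (x * (2 * x - 1) * (Real.log 2 : ℂ)) *
      Complex.exp (-(x + 1 / 2) * (Real.log π : ℂ)) *
      barnesG (1 / 2 + x) * barnesG (1 + x) ^ 2 * barnesG (3 / 2 + x) := by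
  have h12x : (1/2 + x : ℂ) = 1 + (x - 1/2) := by ring
  have h32x : (3/2 + x : ℂ) = 1 + (x + 1/2) := by ring
  rw [show barnesG (1/2 : ℂ) = barnesG (1 + (-(1/2))) from by norm_num,
    show barnesG (1/2 + x) = barnesG (1 + (x - 1/2)) from by rw [h12x],
    show barnesG (3/2 + x) = barnesG (1 + (x + 1/2)) from by rw [h32x]]
  simp only [barnesG_eq, cpow2pi]
  have hK : P (2*x) * P (-(1/2))^2
      = Complex.exp (((Real.log 2 : ℝ):ℂ)/2 + 2*x^2*((Real.log 2 : ℝ):ℂ) - (x+1/2)) *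
        (P (x-1/2) * P x^2 * P (x+1/2)) := by
    have h0 := KEY x
    rw [sqrt2_exp] at h0
    have h1 : Complex.exp (x+1/2) * Complex.exp (-(x+1/2)) = 1 := by
      rw [← Complex.exp_add, show (x + 1/2) + (-(x+1/2)) = 0 from by ring, Complex.exp_zero]
    calc P (2*x) * P (-(1/2))^2
        = P (2*x) * P (-(1/2))^2 * (Complex.exp (x+1/2) * Complex.exp (-(x+1/2))) := by
          rw [h1, mul_one]
      _ = (P (2*x) * P (-(1/2))^2 * Complex.exp (x+1/2)) * Complex.exp (-(x+1/2)) := by ring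
      _ = (Complex.exp (((Real.log 2 : ℝ):ℂ)/2) * Complex.exp (2*x^2*((Real.log 2 : ℝ):ℂ)) *
            (P (x-1/2) * P x^2 * P (x+1/2))) * Complex.exp (-(x+1/2)) := by rw [h0]
      _ = _ := by
          rw [show (((Real.log 2 : ℝ):ℂ)/2 + 2*x^2*((Real.log 2 : ℝ):ℂ) - (x+1/2))
              = ((Real.log 2 : ℝ):ℂ)/2 + (2*x^2*((Real.log 2 : ℝ):ℂ) + (-(x+1/2))) from by ring,
            Complex.exp_add, Complex.exp_add]
          ring
  have expId :
      Complex.exp (2*x/2 * ((Real.log (2*π) : ℝ):ℂ)) *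
        Complex.exp (-(2*x + (2*x)^2*(1+(Real.eulerMascheroniConstant : ℂ)))/2) *
        (Complex.exp (-(1/2)/2 * ((Real.log (2*π) : ℝ):ℂ)) *
          Complex.exp (-(-(1/2) + (-(1/2))^2*(1+(Real.eulerMascheroniConstant : ℂ)))/2))^2 *
        Complex.exp (((Real.log 2 : ℝ):ℂ)/2 + 2*x^2*((Real.log 2 : ℝ):ℂ) - (x+1/2))
      = Complex.exp (x * (2 * x - 1) * (Real.log 2 : ℂ)) *
        Complex.exp (-(x + 1 / 2) * (Real.log π : ℂ)) *
        (Complex.exp ((x-1/2)/2 * ((Real.log (2*π) : ℝ):ℂ)) *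
          Complex.exp (-((x-1/2) + (x-1/2)^2*(1+(Real.eulerMascheroniConstant : ℂ)))/2)) *
        (Complex.exp (x/2 * ((Real.log (2*π) : ℝ):ℂ)) *
          Complex.exp (-(x + x^2*(1+(Real.eulerMascheroniConstant : ℂ)))/2))^2 *
        (Complex.exp ((x+1/2)/2 * ((Real.log (2*π) : ℝ):ℂ)) *
          Complex.exp (-((x+1/2) + (x+1/2)^2*(1+(Real.eulerMascheroniConstant : ℂ)))/2)) := by
    simp only [mul_pow, ← Complex.exp_nat_mul, ← Complex.exp_add]
    congr 1
    rw [log2pi]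
    push_cast
    ring
  linear_combination
    (Complex.exp (2*x/2 * ((Real.log (2*π) : ℝ):ℂ)) *
      Complex.exp (-(2*x + (2*x)^2*(1+(Real.eulerMascheroniConstant : ℂ)))/2) *
      (Complex.exp (-(1/2)/2 * ((Real.log (2*π) : ℝ):ℂ)) *
        Complex.exp (-(-(1/2) + (-(1/2))^2*(1+(Real.eulerMascheroniConstant : ℂ)))/2))^2) * hK
    + (P (x-1/2) * P x^2 * P (x+1/2)) * expId
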